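/- arXiv:2505.22237 — 4 statements merged into one kernel-verified Lean document; each statement's English description precedes it below -/
import Mathlib

section
/- Let F be a field of characteristic 2, let a ∈ F and b ∈ Fˣ. The quaternion algebra [a,b)_F is split (i.e., isomorphic as an F-algebra to the algebra of 2×2 matrices over F) if and only if there exist λ, μ ∈ F such that a = λ² + λ + μ²·b. -/
open FreeAlgebra in
inductive QuatRel (F : Type*) [Field F] (a b : F) :
    FreeAlgebra F (Fin 2) → FreeAlgebra F (Fin 2) → Prop
  | u_sq : QuatRel F a b (ι F 0 * ι F 0 - ι F 0) (algebraMap F _ a)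
  | v_sq : QuatRel F a b (ι F 1 * ι F 1) (algebraMap F _ b)
  | vu : QuatRel F a b (ι F 1 * ι F 0) ((1 - ι F 0) * ι F 1)

/-- The quaternion algebra `[a,b)_F` over a field of characteristic `2`:
generated by `u, v` with `u² - u = a`, `v² = b`, `vu = (1-u)v`. -/
def QuatAlg (F : Type*) [Field F] (a b : F) : Type _ :=
  RingQuot (QuatRel F a b)

instance (F : Type*) [Field F] (a b : F) : Ring (QuatAlg F a b) :=
  inferInstanceAs (Ring (RingQuot (QuatRel F a b)))

instance (F : Type*) [Field F] (a b : F) : Algebra F (QuatAlg F a b) :=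
  inferInstanceAs (Algebra F (RingQuot (QuatRel F a b)))

namespace QuatAux
variable {F : Type*} [Field F] (a b : F)

def uu : QuatAlg F a b := RingQuot.mkAlgHom F (QuatRel F a b) (FreeAlgebra.ι F 0)
def vv : QuatAlg F a b := RingQuot.mkAlgHom F (QuatRel F a b) (FreeAlgebra.ι F 1)

lemma u_sq : uu a b * uu a b - uu a b = algebraMap F (QuatAlg F a b) a := by
  have := RingQuot.mkAlgHom_rel F (QuatRel.u_sq (F := F) (a := a) (b := b))
  simp only [map_sub, map_mul, AlgHom.commutes] at this
  exact this

lemma v_sq : vv a b * vv a b = algebraMap F (QuatAlg F a b) b := by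
  have := RingQuot.mkAlgHom_rel F (QuatRel.v_sq (F := F) (a := a) (b := b))
  simp only [map_mul, AlgHom.commutes] at this
  exact this

lemma v_mul_u : vv a b * uu a b = (1 - uu a b) * vv a b := by
  have := RingQuot.mkAlgHom_rel F (QuatRel.vu (F := F) (a := a) (b := b))
  simp only [map_mul, map_sub, map_one] at this
  exact this

local notation "u" => uu a b
local notation "v" => vv a b

lemma u2 : u * u = u + a • 1 := by
  have h := u_sq a b
  rw [Algebra.algebraMap_eq_smul_one] at h
  exact (eq_add_of_sub_eq h).trans (add_comm _ _)

lemma v2 : v * v = b • 1 := by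
  have h := v_sq a b
  rwa [Algebra.algebraMap_eq_smul_one] at h

lemma vu : v * u = v - u * v := by
  rw [v_mul_u, sub_mul, one_mul]

abbrev S : Submodule F (QuatAlg F a b) :=
  Submodule.span F {1, u, v, u * v}

lemma one_mem_S : (1 : QuatAlg F a b) ∈ S a b := Submodule.subset_span (by simp)
lemma u_mem_S : u ∈ S a b := Submodule.subset_span (by simp)
lemma v_mem_S : v ∈ S a b := Submodule.subset_span (by simp)
lemma uv_mem_S : u * v ∈ S a b := Submodule.subset_span (by simp)

lemma v_uv : v * (u * v) = b • 1 - b • u := by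
  rw [← mul_assoc, vu, sub_mul, mul_assoc, v2, mul_smul_comm, mul_one]

lemma gen_mul_mem {x y : QuatAlg F a b} (hx : x ∈ ({1, u, v, u * v} : Set _))
    (hy : y ∈ ({1, u, v, u * v} : Set _)) : x * y ∈ S a b := by
  have h1 := one_mem_S a b
  have hu := u_mem_S a b
  have hv := v_mem_S a b
  have huv := uv_mem_S a b
  simp only [Set.mem_insert_iff, Set.mem_singleton_iff] at hx hy
  rcases hx with rfl | rfl | rfl | rfl <;> rcases hy with rfl | rfl | rfl | rfl <;>
    (try simp only [one_mul, mul_one])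
  · exact h1
  · exact hu
  · exact hv
  · exact huv
  · exact hu
  · rw [u2]; exact add_mem hu (Submodule.smul_mem _ _ h1)
  · exact huv
  · rw [← mul_assoc, u2, add_mul, smul_mul_assoc, one_mul]
    exact add_mem huv (Submodule.smul_mem _ _ hv)
  · exact hv
  · rw [vu]; exact sub_mem hv huv
  · rw [v2]; exact Submodule.smul_mem _ _ h1
  · rw [v_uv]
    exact sub_mem (Submodule.smul_mem _ _ h1) (Submodule.smul_mem _ _ hu)
  · exact huv
  · rw [mul_assoc, vu, mul_sub, ← mul_assoc, u2, add_mul, smul_mul_assoc, one_mul]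
    have h : u * v - (u * v + a • v) = -(a • v) := by abel
    rw [h]
    exact neg_mem (Submodule.smul_mem _ _ hv)
  · rw [mul_assoc, v2, mul_smul_comm, mul_one]
    exact Submodule.smul_mem _ _ hu
  · rw [mul_assoc, v_uv, mul_sub, mul_smul_comm, mul_one, mul_smul_comm, u2]
    have h : b • u - b • (u + a • 1) = -((b * a) • 1) := by
      rw [smul_add, smul_smul]; abel
    rw [h]
    exact neg_mem (Submodule.smul_mem _ _ h1)

lemma mul_mem_S {x y : QuatAlg F a b} (hx : x ∈ S a b) (hy : y ∈ S a b) :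
    x * y ∈ S a b := by
  induction hx using Submodule.span_induction with
  | mem x hxg =>
    induction hy using Submodule.span_induction with
    | mem y hyg => exact gen_mul_mem a b hxg hyg
    | zero => rw [mul_zero]; exact zero_mem _
    | add y z _ _ h1 h2 => rw [mul_add]; exact add_mem h1 h2
    | smul c y _ h => rw [mul_smul_comm]; exact Submodule.smul_mem _ _ h
  | zero => rw [zero_mul]; exact zero_mem _
  | add x z _ _ h1 h2 => rw [add_mul]; exact add_mem h1 h2
  | smul c x _ h => rw [smul_mul_assoc]; exact Submodule.smul_mem _ _ h

lemma span_eq_top : S a b = ⊤ := by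
  rw [Submodule.eq_top_iff']
  intro x
  obtain ⟨y, rfl⟩ := RingQuot.mkAlgHom_surjective F (QuatRel F a b) x
  induction y using FreeAlgebra.induction with
  | grade0 r =>
    rw [AlgHom.commutes, Algebra.algebraMap_eq_smul_one]
    exact Submodule.smul_mem _ _ (one_mem_S a b)
  | grade1 i =>
    fin_cases i
    · exact u_mem_S a b
    · exact v_mem_S a b
  | add x y hx hy => rw [map_add]; exact add_mem hx hy
  | mul x y hx hy => rw [map_mul]; exact mul_mem_S a b hx hy


section Back
variable [CharP F 2] (l m : F)

def U0 : Matrix (Fin 2) (Fin 2) F := !![l, b*m; m, l+1]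
def V0 : Matrix (Fin 2) (Fin 2) F := !![0, b; 1, 0]

lemma U0_rel (ha : a = l^2 + l + m^2*b) :
    U0 b l m * U0 b l m - U0 b l m = algebraMap F (Matrix (Fin 2) (Fin 2) F) a := by
  have h2 : (2 : F) = 0 := CharTwo.two_eq_zero
  subst ha
  unfold U0
  ext i j
  fin_cases i <;> fin_cases j <;>
    simp [Matrix.mul_apply, Fin.sum_univ_succ, Matrix.algebraMap_matrix_apply,
      CharTwo.sub_eq_add, CharTwo.neg_eq, CharTwo.two_eq_zero] <;>
    first
      | ring1
      | linear_combination l * h2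
      | linear_combination (l * b * m + b * m) * h2
      | linear_combination (m + m * l) * h2
      | linear_combination (1 + l) * h2

lemma V0_rel : V0 b * V0 b = algebraMap F (Matrix (Fin 2) (Fin 2) F) b := by
  unfold V0
  ext i j
  fin_cases i <;> fin_cases j <;>
    simp [Matrix.mul_apply, Fin.sum_univ_succ, Matrix.algebraMap_matrix_apply]

lemma VU0_rel : V0 b * U0 b l m = (1 - U0 b l m) * V0 b := by
  have h2 : (2 : F) = 0 := CharTwo.two_eq_zero
  unfold U0 V0
  rw [sub_mul, one_mul]
  ext i j
  fin_cases i <;> fin_cases j <;>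
    simp [Matrix.mul_apply, Fin.sum_univ_succ, CharTwo.sub_eq_add, CharTwo.neg_eq,
      CharTwo.two_eq_zero] <;>
    first
      | ring1
      | linear_combination (-1 : F) * h2

def preφ : FreeAlgebra F (Fin 2) →ₐ[F] Matrix (Fin 2) (Fin 2) F :=
  FreeAlgebra.lift F ![U0 b l m, V0 b]

lemma preφ_rel (ha : a = l^2 + l + m^2*b) :
    ∀ ⦃x y⦄, QuatRel F a b x y → preφ b l m x = preφ b l m y := by
  rintro x y (h | h | h) <;>
    simp only [preφ, map_mul, map_sub, map_one, FreeAlgebra.lift_ι_apply,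
      AlgHom.commutes, Matrix.cons_val_zero, Matrix.cons_val_one, Matrix.head_cons]
  · exact U0_rel a b l m ha
  · exact V0_rel b
  · exact VU0_rel b l m

def φb (ha : a = l^2 + l + m^2*b) : QuatAlg F a b →ₐ[F] Matrix (Fin 2) (Fin 2) F :=
  RingQuot.liftAlgHom F ⟨preφ b l m, preφ_rel a b l m ha⟩

lemma φb_u (ha : a = l^2 + l + m^2*b) : φb a b l m ha (uu a b) = U0 b l m := by
  unfold φb uu
  exact (RingQuot.liftAlgHom_mkAlgHom_apply F (preφ b l m) (preφ_rel a b l m ha)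
    (FreeAlgebra.ι F 0)).trans (by simp [preφ, FreeAlgebra.lift_ι_apply])

lemma φb_v (ha : a = l^2 + l + m^2*b) : φb a b l m ha (vv a b) = V0 b := by
  unfold φb vv
  exact (RingQuot.liftAlgHom_mkAlgHom_apply F (preφ b l m) (preφ_rel a b l m ha)
    (FreeAlgebra.ι F 1)).trans (by simp [preφ, FreeAlgebra.lift_ι_apply])

lemma matrix_combo (hb : b ≠ 0) (M : Matrix (Fin 2) (Fin 2) F) :
    M = (M 0 0 - (M 1 1 - M 0 0) * l - (M 1 0 - M 0 1 / b) * b * m) • 1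
      + (M 1 1 - M 0 0) • U0 b l m
      + (M 1 0 - (M 1 1 - M 0 0) * m - (M 1 0 - M 0 1 / b) * (l+1)) • V0 b
      + (M 1 0 - M 0 1 / b) • (U0 b l m * V0 b) := by
  unfold U0 V0
  ext i j
  fin_cases i <;> fin_cases j <;>
    simp [Matrix.mul_apply, Fin.sum_univ_succ, Matrix.one_apply] <;>
    field_simp <;> ring

lemma φb_surjective (hb : b ≠ 0) (ha : a = l^2 + l + m^2*b) :
    Function.Surjective (φb a b l m ha) := by
  intro M
  refine ⟨(M 0 0 - (M 1 1 - M 0 0) * l - (M 1 0 - M 0 1 / b) * b * m) • 1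
      + (M 1 1 - M 0 0) • uu a b
      + (M 1 0 - (M 1 1 - M 0 0) * m - (M 1 0 - M 0 1 / b) * (l+1)) • vv a b
      + (M 1 0 - M 0 1 / b) • (uu a b * vv a b), ?_⟩
  rw [map_add, map_add, map_add, map_smul, map_smul, map_smul, map_smul, map_one,
    map_mul, φb_u, φb_v]
  exact (matrix_combo b l m hb M).symm

instance : Module.Finite F (QuatAlg F a b) :=
  Module.finite_def.mpr (Submodule.fg_def.mpr
    ⟨{1, uu a b, vv a b, uu a b * vv a b},
      (Set.finite_singleton _).insert _ |>.insert _ |>.insert _, span_eq_top a b⟩)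

lemma finrank_le : Module.finrank F (QuatAlg F a b) ≤ 4 := by
  classical
  set s : Finset (QuatAlg F a b) := {1, uu a b, vv a b, uu a b * vv a b} with hs
  have hsp : Submodule.span F (s : Set (QuatAlg F a b)) = ⊤ := by
    rw [hs]
    simp only [Finset.coe_insert, Finset.coe_singleton]
    exact span_eq_top a b
  have h := finrank_span_finset_le_card (R := F) s
  rw [Set.finrank, hsp, finrank_top] at h
  refine h.trans ?_
  apply (Finset.card_insert_le _ _).trans
  have h3 : ({uu a b, vv a b, uu a b * vv a b} : Finset (QuatAlg F a b)).card ≤ 3 := by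
    apply (Finset.card_insert_le _ _).trans
    have h2 : ({vv a b, uu a b * vv a b} : Finset (QuatAlg F a b)).card ≤ 2 := by
      apply (Finset.card_insert_le _ _).trans
      simp
    omega
  omega

lemma φb_bijective (hb : b ≠ 0) (ha : a = l^2 + l + m^2*b) :
    Function.Bijective (φb a b l m ha) := by
  refine ⟨?_, φb_surjective a b l m hb ha⟩
  have hsurj := φb_surjective a b l m hb ha
  have hrange : LinearMap.range (φb a b l m ha).toLinearMap = ⊤ :=
    LinearMap.range_eq_top.mpr hsurj
  have hrn := LinearMap.finrank_range_add_finrank_ker (φb a b l m ha).toLinearMap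
  rw [hrange] at hrn
  have hM : Module.finrank F (Matrix (Fin 2) (Fin 2) F) = 4 := by
    rw [Module.finrank_matrix]
    simp
  rw [finrank_top, hM] at hrn
  have hker : Module.finrank F (LinearMap.ker (φb a b l m ha).toLinearMap) = 0 := by
    have := finrank_le a b
    omega
  have : LinearMap.ker (φb a b l m ha).toLinearMap = ⊥ :=
    Submodule.finrank_eq_zero.mp hker
  exact LinearMap.ker_eq_bot.mp this

end Back

section Forward
variable [CharP F 2]

lemma det_combo (h2 : (2:F) = 0) (p q r f g x y z w : F) :
    (x • (1 : Matrix (Fin 2) (Fin 2) F) + y • !![p, q; r, 1-p]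
      + z • !![q*g+f*r, f; g, q*g+f*r]
      + w • (!![p, q; r, 1-p] * !![q*g+f*r, f; g, q*g+f*r])).det
    = x^2 + x*y + (p*p+p+q*r)*y^2
      + ((q*g+f*r)*(q*g+f*r)+f*g) * (z^2 + z*w + (p*p+p+q*r)*w^2) := by
  rw [Matrix.det_fin_two]
  simp [Matrix.mul_apply, Fin.sum_univ_succ, Matrix.one_apply]
  linear_combination (-(f*g*z*w) - f*g*z^2 + r*f*x*w + r*f*x*z + q*g*x*w + q*g*x*z
    - q*r*y^2 - q*r^2*f*y*w - q*r^3*f^2*w^2 - q^2*r*g*y*w - 2*q^2*r^2*f*g*w^2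
    - q^3*r*g^2*w^2 - p*f*g*w^2 + p*r*f*y*w + p*q*g*y*w - p^2*y^2 - p^2*r*f*y*w
    - p^2*r^2*f^2*w^2 - p^2*q*g*y*w - 2*p^2*q*r*f*g*w^2 - p^2*q^2*g^2*w^2) * h2

lemma extract (h2 : (2:F) = 0) (hb : b ≠ 0) (x y z w : F)
    (hn : x^2 + x*y + a*y^2 + b*(z^2 + z*w + a*w^2) = 0)
    (hnz : ¬(x = 0 ∧ y = 0 ∧ z = 0 ∧ w = 0)) :
    ∃ l m : F, a = l^2 + l + m^2*b := by
  by_cases ht : z^2 + z*w + a*w^2 = 0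
  · have hxy : x^2 + x*y + a*y^2 = 0 := by linear_combination hn - b*ht
    by_cases hy : y = 0
    · subst hy
      have hx : x = 0 := by
        have hx2 : x^2 = 0 := by linear_combination hxy
        exact pow_eq_zero_iff (n := 2) (by norm_num) |>.mp hx2
      subst hx
      by_cases hw : w = 0
      · subst hw
        have hz : z = 0 := by
          have hz2 : z^2 = 0 := by linear_combination ht
          exact pow_eq_zero_iff (n := 2) (by norm_num) |>.mp hz2
        exact absurd ⟨rfl, rfl, hz, rfl⟩ hnz
      · refine ⟨z/w, 0, ?_⟩
        field_simp
        linear_combination ht - (z^2+z*w)*h2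
    · refine ⟨x/y, 0, ?_⟩
      field_simp
      linear_combination hxy - (x^2+x*y)*h2
  · have hkey : (x*z + x*w + a*y*w)^2 + (x*z + x*w + a*y*w)*(x*w + y*z)
        + a*(x*w + y*z)^2 = b*(z^2+z*w+a*w^2)^2 := by
      linear_combination (z^2+z*w+a*w^2) * hn
        + (x^2*w^2 + x^2*z*w + a*x*y*w^2 + 2*a*x*y*z*w - b*(z^2+z*w+a*w^2)^2) * h2
    by_cases hT : x*w + y*z = 0
    · have hS : (x*z + x*w + a*y*w) ≠ 0 := by
        intro h0
        have hbt : b*(z^2+z*w+a*w^2)^2 = 0 := by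
          linear_combination (-1 : F)*hkey + (x*z + x*w + a*y*w + (x*w+y*z))*h0
            + (a*(x*w+y*z))*hT
        have ht2 : (z^2+z*w+a*w^2)^2 = 0 := by
          rcases mul_eq_zero.mp hbt with h | h
          · exact absurd h hb
          · exact h
        exact ht (pow_eq_zero_iff (n := 2) (by norm_num) |>.mp ht2)
      refine ⟨a, a*(z^2+z*w+a*w^2)/(x*z + x*w + a*y*w), ?_⟩
      have hm : (a*(z^2+z*w+a*w^2)/(x*z + x*w + a*y*w))^2*b = a^2 := by
        rw [div_pow, div_mul_eq_mul_div, div_eq_iff (pow_ne_zero 2 hS)]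
        linear_combination (-a^2)*hkey + (a^2*(x*z+x*w+a*y*w) + a^3*(x*w+y*z))*hT
      rw [hm]
      linear_combination (-a^2)*h2
    · refine ⟨(x*z + x*w + a*y*w)/(x*w + y*z), (z^2+z*w+a*w^2)/(x*w + y*z), ?_⟩
      field_simp
      rw [eq_div_iff (by rw [mul_comm z y]; exact pow_ne_zero 2 hT)]
      linear_combination hkey - ((x*z + x*w + a*y*w)^2 + (x*z + x*w + a*y*w)*(x*w+y*z))*h2

lemma forward (hb : b ≠ 0) (ψ : QuatAlg F a b ≃ₐ[F] Matrix (Fin 2) (Fin 2) F) :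
    ∃ l m : F, a = l^2 + l + m^2*b := by
  have h2 : (2:F) = 0 := CharTwo.two_eq_zero
  set U := ψ (uu a b) with hUdef
  set V := ψ (vv a b) with hVdef
  have hU : U * U - U = algebraMap F _ a := by
    rw [hUdef, ← map_mul, ← map_sub, u_sq, AlgEquiv.commutes]
  have hV : V * V = algebraMap F _ b := by
    rw [hVdef, ← map_mul, v_sq, AlgEquiv.commutes]
  have hVU : V * U = (1 - U) * V := by
    rw [hVdef, hUdef, ← map_mul, v_mul_u, map_mul, map_sub, map_one]
  have hU00 := congrFun (congrFun hU 0) 0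
  have hU01 := congrFun (congrFun hU 0) 1
  have hU10 := congrFun (congrFun hU 1) 0
  have hV00 := congrFun (congrFun hV 0) 0
  have hV11 := congrFun (congrFun hV 1) 1
  have hVU00 := congrFun (congrFun hVU 0) 0
  simp [Matrix.mul_apply, Fin.sum_univ_succ, Matrix.sub_apply,
    Matrix.algebraMap_matrix_apply, Matrix.one_apply] at hU00 hU01 hU10 hV00 hV11 hVU00
  by_cases hps : U 0 0 + U 1 1 - 1 = 0
  · -- s = 1 - p case
    have hs : U 1 1 = 1 - U 0 0 := by linear_combination hps
    have hee : V 1 1 = V 0 0 := by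
      have hsq : (V 1 1 - V 0 0)^2 = 0 := by
        linear_combination hV00 + hV11 + (b - V 0 0 * V 1 1 - V 0 1 * V 1 0)*h2
      have h := pow_eq_zero_iff (n := 2) (by norm_num) |>.mp hsq
      linear_combination h
    have he : V 0 0 = U 0 1 * V 1 0 + V 0 1 * U 1 0 := by
      linear_combination (-1 : F)*hVU00 + (U 0 0 * V 0 0)*h2
    have ha' : a = U 0 0 * U 0 0 + U 0 0 + U 0 1 * U 1 0 := by
      linear_combination (-1 : F)*hU00 + (-(U 0 0))*h2
    have hb' : b = (U 0 1 * V 1 0 + V 0 1 * U 1 0) * (U 0 1 * V 1 0 + V 0 1 * U 1 0)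
        + V 0 1 * V 1 0 := by
      linear_combination (-1 : F)*hV00 + (V 0 0 + (U 0 1 * V 1 0 + V 0 1 * U 1 0))*he
    have hUeta : U = !![U 0 0, U 0 1; U 1 0, 1 - U 0 0] := by
      have h := Matrix.eta_fin_two U
      rw [hs] at h
      exact h
    have hVeta : V = !![U 0 1 * V 1 0 + V 0 1 * U 1 0, V 0 1; V 1 0,
        U 0 1 * V 1 0 + V 0 1 * U 1 0] := by
      have h := Matrix.eta_fin_two V
      rw [hee, he] at h
      exact h
    -- decompose the preimage of E11
    have hmem : ψ.symm !![(1:F),0;0,0] ∈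
        Submodule.span F {1, uu a b, vv a b, uu a b * vv a b} := by
      have h := span_eq_top (F := F) a b
      rw [Submodule.eq_top_iff'] at h
      exact h _
    rw [Submodule.mem_span_insert] at hmem
    obtain ⟨x, q1, hmem, hE⟩ := hmem
    rw [Submodule.mem_span_insert] at hmem
    obtain ⟨y, q2, hmem, rfl⟩ := hmem
    rw [Submodule.mem_span_insert] at hmem
    obtain ⟨z, q3, hmem, rfl⟩ := hmem
    rw [Submodule.mem_span_singleton] at hmem
    obtain ⟨w, rfl⟩ := hmem
    have hEexp : !![(1:F),0;0,0]
        = x • (1 : Matrix (Fin 2) (Fin 2) F) + y • U + z • V + w • (U*V) := by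
      have h := congrArg ψ hE
      rw [AlgEquiv.apply_symm_apply] at h
      simp only [map_add, map_smul, map_one, map_mul] at h
      rw [h, hUdef, hVdef]
      abel
    have hnz : ¬(x = 0 ∧ y = 0 ∧ z = 0 ∧ w = 0) := by
      rintro ⟨rfl, rfl, rfl, rfl⟩
      simp only [zero_smul, add_zero] at hEexp
      have h00 := congrFun (congrFun hEexp 0) 0
      simp at h00
    have hdet : (x • (1 : Matrix (Fin 2) (Fin 2) F) + y • U + z • V + w • (U*V)).det = 0 := by
      rw [← hEexp, Matrix.det_fin_two_of]
      ring
    rw [hUeta, hVeta, det_combo h2] at hdet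
    rw [← ha', ← hb'] at hdet
    exact extract a b h2 hb x y z w hdet hnz
  · -- q = r = 0 case
    have hq : U 0 1 = 0 := by
      rcases mul_eq_zero.mp (show U 0 1 * (U 0 0 + U 1 1 - 1) = 0 by
        linear_combination hU01) with h | h
      · exact h
      · exact absurd h hps
    have hr : U 1 0 = 0 := by
      rcases mul_eq_zero.mp (show U 1 0 * (U 0 0 + U 1 1 - 1) = 0 by
        linear_combination hU10) with h | h
      · exact h
      · exact absurd h hps
    exact ⟨U 0 0, 0, by
      linear_combination (-1 : F)*hU00 + (-(U 0 0))*h2 + (U 1 0)*hq⟩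

end Forward


end QuatAux


theorem stmt0 (F : Type*) [Field F] [CharP F 2] (a b : F) (hb : b ≠ 0) :
    Nonempty (QuatAlg F a b ≃ₐ[F] Matrix (Fin 2) (Fin 2) F) ↔
      ∃ l m : F, a = l ^ 2 + l + m ^ 2 * b := by
  constructor
  · rintro ⟨ψ⟩
    exact QuatAux.forward a b hb ψ
  · rintro ⟨l, m, ha⟩
    exact ⟨AlgEquiv.ofBijective (QuatAux.φb a b l m ha) (QuatAux.φb_bijective a b l m hb ha)⟩
end

section
/- Let F be a field of characteristic 2, let a₁, a₂ ∈ F and b₁, b₂ ∈ Fˣ. Then there is an isomorphism of F-algebras [a₁,b₁)_F ⊗_F [a₂,b₂)_F ≅ [a₁,b₁b₂)_F ⊗_F [a₁+a₂,b₂)_F. -/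
open scoped TensorProduct

namespace QuatAlg

variable {F : Type*} [Field F] {a b : F}

/-- The generator `u`. -/
def uu (F : Type*) [Field F] (a b : F) : QuatAlg F a b :=
  RingQuot.mkAlgHom F (QuatRel F a b) (FreeAlgebra.ι F 0)

/-- The generator `v`. -/
def vv (F : Type*) [Field F] (a b : F) : QuatAlg F a b :=
  RingQuot.mkAlgHom F (QuatRel F a b) (FreeAlgebra.ι F 1)

lemma u_sq : uu F a b * uu F a b = algebraMap F _ a + uu F a b := by
  have h := RingQuot.mkAlgHom_rel F (QuatRel.u_sq (F := F) (a := a) (b := b))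
  simp only [map_sub, map_mul, AlgHom.commutes] at h
  rw [sub_eq_iff_eq_add] at h
  exact h

lemma v_sq : vv F a b * vv F a b = algebraMap F _ b := by
  have h := RingQuot.mkAlgHom_rel F (QuatRel.v_sq (F := F) (a := a) (b := b))
  simp only [map_mul, AlgHom.commutes] at h
  exact h

lemma v_mul_u : vv F a b * uu F a b = (1 - uu F a b) * vv F a b := by
  have h := RingQuot.mkAlgHom_rel F (QuatRel.vu (F := F) (a := a) (b := b))
  simp only [map_mul, map_sub, map_one] at h
  exact h

/-- Lift a pair of elements satisfying the quaternion relations to an algebra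
homomorphism out of `QuatAlg F a b`. -/
def lift {A : Type*} [Ring A] [Algebra F A] (x y : A)
    (h1 : x * x - x = algebraMap F A a) (h2 : y * y = algebraMap F A b)
    (h3 : y * x = (1 - x) * y) : QuatAlg F a b →ₐ[F] A :=
  RingQuot.liftAlgHom F (s := QuatRel F a b)
    ⟨FreeAlgebra.lift F (fun i => if i = 0 then x else y), by
      intro p q h
      cases h <;> simp [h1, h2, h3]⟩

@[simp] lemma lift_u {A : Type*} [Ring A] [Algebra F A] (x y : A)
    (h1 : x * x - x = algebraMap F A a) (h2 : y * y = algebraMap F A b)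
    (h3 : y * x = (1 - x) * y) : lift x y h1 h2 h3 (uu F a b) = x :=
  (RingQuot.liftAlgHom_mkAlgHom_apply _ _ _ _).trans (by simp)

@[simp] lemma lift_v {A : Type*} [Ring A] [Algebra F A] (x y : A)
    (h1 : x * x - x = algebraMap F A a) (h2 : y * y = algebraMap F A b)
    (h3 : y * x = (1 - x) * y) : lift x y h1 h2 h3 (vv F a b) = y :=
  (RingQuot.liftAlgHom_mkAlgHom_apply _ _ _ _).trans (by simp)

lemma hom_ext {A : Type*} [Ring A] [Algebra F A] {φ ψ : QuatAlg F a b →ₐ[F] A}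
    (h1 : φ (uu F a b) = ψ (uu F a b)) (h2 : φ (vv F a b) = ψ (vv F a b)) :
    φ = ψ := by
  apply RingQuot.ringQuot_ext'
  apply FreeAlgebra.hom_ext
  funext i
  fin_cases i
  · exact h1
  · exact h2

lemma commute_all {A : Type*} [Ring A] [Algebra F A] (φ : QuatAlg F a b →ₐ[F] A)
    (c : A) (hu : Commute (φ (uu F a b)) c) (hv : Commute (φ (vv F a b)) c)
    (z : QuatAlg F a b) : Commute (φ z) c := by
  obtain ⟨z, rfl⟩ := RingQuot.mkAlgHom_surjective F (QuatRel F a b) z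
  induction z with
  | grade0 r =>
      have h : φ ((algebraMap F (QuatAlg F a b)) r) = algebraMap F A r := φ.commutes r
      have h2 : (RingQuot.mkAlgHom F (QuatRel F a b))
          ((algebraMap F (FreeAlgebra F (Fin 2))) r) = algebraMap F (QuatAlg F a b) r :=
        AlgHom.commutes _ r
      rw [h2, h]
      exact Algebra.commutes r c
  | grade1 i =>
      fin_cases i
      · exact hu
      · exact hv
  | mul x y hx hy =>
      have h := hx.mul_left hy
      have e : φ (RingQuot.mkAlgHom F (QuatRel F a b) (x * y)) = φ (RingQuot.mkAlgHom F (QuatRel F a b) x) * φ (RingQuot.mkAlgHom F (QuatRel F a b) y) :=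
        map_mul (φ.comp (RingQuot.mkAlgHom F (QuatRel F a b))) x y
      rw [e]
      exact h
  | add x y hx hy =>
      have h := hx.add_left hy
      have e : φ (RingQuot.mkAlgHom F (QuatRel F a b) (x + y)) = φ (RingQuot.mkAlgHom F (QuatRel F a b) x) + φ (RingQuot.mkAlgHom F (QuatRel F a b) y) :=
        map_add (φ.comp (RingQuot.mkAlgHom F (QuatRel F a b))) x y
      rw [e]
      exact h

set_option linter.unusedSectionVars false

lemma add_self_eq_zero' {F : Type*} [Field F] [CharP F 2] {M : Type*}
    [AddCommMonoid M] [Module F M] (x : M) : x + x = 0 := by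
  rw [← two_smul F x, show (2 : F) = 0 from by
    exact_mod_cast CharP.cast_eq_zero F 2, zero_smul]

lemma two_nsmul_eq_zero' (F : Type*) [Field F] [CharP F 2] {M : Type*}
    [AddCommMonoid M] [Module F M] (x : M) : (2 : ℕ) • x = 0 := by
  rw [two_nsmul]; exact add_self_eq_zero' (F := F) x

lemma two_zsmul_eq_zero' (F : Type*) [Field F] [CharP F 2] {M : Type*}
    [AddCommGroup M] [Module F M] (x : M) : (2 : ℤ) • x = 0 := by
  rw [two_zsmul]; exact add_self_eq_zero' (F := F) x

lemma neg_eq_self' (F : Type*) [Field F] [CharP F 2] {M : Type*}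
    [AddCommGroup M] [Module F M] (x : M) : -x = x :=
  neg_eq_of_add_eq_zero_left (add_self_eq_zero' (F := F) x)

lemma v_mul_u' {F : Type*} [Field F] {a b : F} :
    vv F a b * uu F a b = vv F a b - uu F a b * vv F a b := by
  rw [v_mul_u, sub_mul, one_mul]

section main

variable {F : Type*} [Field F] [CharP F 2] (a a' b b' : F)

local notation "T" => QuatAlg F a b ⊗[F] QuatAlg F a' b'

lemma algMap_left (r : F) :
    algebraMap F (QuatAlg F a b) r ⊗ₜ[F] (1 : QuatAlg F a' b') = algebraMap F T r :=
  (Algebra.TensorProduct.algebraMap_apply r).symm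

lemma algMap_right (r : F) :
    (1 : QuatAlg F a b) ⊗ₜ[F] algebraMap F (QuatAlg F a' b') r = algebraMap F T r :=
  (Algebra.TensorProduct.includeRight (R := F) (A := QuatAlg F a b)).commutes r

/-- `X = u ⊗ 1`. -/
noncomputable def X : T := uu F a b ⊗ₜ[F] 1

/-- `Y c = c • (v ⊗ v')`. -/
noncomputable def Y (c : F) : T := c • (vv F a b ⊗ₜ[F] vv F a' b')

/-- `P = u ⊗ 1 + 1 ⊗ u'`. -/
noncomputable def P : T := uu F a b ⊗ₜ[F] 1 + 1 ⊗ₜ[F] uu F a' b'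

/-- `Q = 1 ⊗ v'`. -/
noncomputable def Q : T := 1 ⊗ₜ[F] vv F a' b'

lemma relX : X a a' b b' * X a a' b b' - X a a' b b' = algebraMap F T a := by
  rw [X, Algebra.TensorProduct.tmul_mul_tmul, one_mul, ← TensorProduct.sub_tmul,
    u_sq, add_sub_cancel_right, algMap_left]

lemma relY (c d : F) (hd : c * c * (b * b') = d) :
    Y a a' b b' c * Y a a' b b' c = algebraMap F T d := by
  rw [Y, smul_mul_smul_comm, Algebra.TensorProduct.tmul_mul_tmul, v_sq, v_sq, ← hd]
  rw [map_mul, map_mul, map_mul, Algebra.smul_def, map_mul]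
  rw [show (algebraMap F (QuatAlg F a b)) b ⊗ₜ[F] (algebraMap F (QuatAlg F a' b')) b'
      = ((algebraMap F (QuatAlg F a b)) b ⊗ₜ[F] (1 : QuatAlg F a' b'))
        * ((1 : QuatAlg F a b) ⊗ₜ[F] (algebraMap F (QuatAlg F a' b')) b') from by
    rw [Algebra.TensorProduct.tmul_mul_tmul, mul_one, one_mul]]
  rw [algMap_left, algMap_right]

lemma relYX (c : F) : Y a a' b b' c * X a a' b b'
    = (1 - X a a' b b') * Y a a' b b' c := by
  rw [Y, X, smul_mul_assoc, mul_smul_comm, Algebra.TensorProduct.tmul_mul_tmul,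
    mul_one, v_mul_u, Algebra.TensorProduct.one_def, ← TensorProduct.sub_tmul,
    Algebra.TensorProduct.tmul_mul_tmul, one_mul]

lemma relP (e : F) (he : a + a' = e) :
    P a a' b b' * P a a' b b' - P a a' b b' = algebraMap F T e := by
  simp only [P, mul_add, add_mul, Algebra.TensorProduct.tmul_mul_tmul, one_mul,
    mul_one, u_sq, ← he, map_add, algMap_left, algMap_right,
    TensorProduct.add_tmul, TensorProduct.tmul_add]
  abel_nf
  simp only [two_nsmul_eq_zero' F, two_zsmul_eq_zero' F, neg_one_zsmul, one_zsmul,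
    neg_eq_self' F, zero_add, add_zero, neg_zero, algMap_left, algMap_right]

lemma relQ : Q a a' b b' * Q a a' b b' = algebraMap F T b' := by
  rw [Q, Algebra.TensorProduct.tmul_mul_tmul, one_mul, v_sq, algMap_right]

lemma relQP : Q a a' b b' * P a a' b b' = (1 - P a a' b b') * Q a a' b b' := by
  simp only [Q, P, mul_add, add_mul, sub_mul, one_mul, mul_one,
    Algebra.TensorProduct.tmul_mul_tmul, v_mul_u',
    TensorProduct.tmul_sub, TensorProduct.sub_tmul, TensorProduct.add_tmul,
    TensorProduct.tmul_add]
  abel_nf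
  simp only [two_nsmul_eq_zero' F, two_zsmul_eq_zero' F, neg_one_zsmul, one_zsmul,
    neg_eq_self' F, zero_add, add_zero, neg_zero, algMap_left, algMap_right]

lemma commXP : Commute (X a a' b b') (P a a' b b') := by
  show _ * _ = _ * _
  simp only [X, P, mul_add, add_mul, Algebra.TensorProduct.tmul_mul_tmul,
    one_mul, mul_one]

lemma commXQ : Commute (X a a' b b') (Q a a' b b') := by
  show _ * _ = _ * _
  simp only [X, Q, Algebra.TensorProduct.tmul_mul_tmul, one_mul, mul_one]

lemma commYP (c : F) : Commute (Y a a' b b' c) (P a a' b b') := by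
  show _ * _ = _ * _
  simp only [Y, P, smul_mul_assoc, mul_smul_comm]
  congr 1
  simp only [mul_add, add_mul, Algebra.TensorProduct.tmul_mul_tmul, one_mul,
    mul_one, v_mul_u', TensorProduct.tmul_sub, TensorProduct.sub_tmul]
  abel_nf
  simp only [two_nsmul_eq_zero' F, two_zsmul_eq_zero' F, neg_one_zsmul, one_zsmul,
    neg_eq_self' F, zero_add, add_zero, neg_zero, algMap_left, algMap_right]

lemma commYQ (c : F) : Commute (Y a a' b b' c) (Q a a' b b') := by
  show _ * _ = _ * _
  simp only [Y, Q, smul_mul_assoc, mul_smul_comm,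
    Algebra.TensorProduct.tmul_mul_tmul, one_mul, mul_one]

/-- First tensor factor map. -/
noncomputable def fhalf (c d : F) (hd : c * c * (b * b') = d) :
    QuatAlg F a d →ₐ[F] T :=
  lift (X a a' b b') (Y a a' b b' c) (relX a a' b b')
    (relY a a' b b' c d hd) (relYX a a' b b' c)

@[simp] lemma fhalf_u (c d : F) (hd : c * c * (b * b') = d) :
    fhalf a a' b b' c d hd (uu F a d) = X a a' b b' := lift_u _ _ _ _ _

@[simp] lemma fhalf_v (c d : F) (hd : c * c * (b * b') = d) :
    fhalf a a' b b' c d hd (vv F a d) = Y a a' b b' c := lift_v _ _ _ _ _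

/-- Second tensor factor map. -/
noncomputable def ghalf (e : F) (he : a + a' = e) :
    QuatAlg F e b' →ₐ[F] T :=
  lift (P a a' b b') (Q a a' b b') (relP a a' b b' e he)
    (relQ a a' b b') (relQP a a' b b')

@[simp] lemma ghalf_u (e : F) (he : a + a' = e) :
    ghalf a a' b b' e he (uu F e b') = P a a' b b' := lift_u _ _ _ _ _

@[simp] lemma ghalf_v (e : F) (he : a + a' = e) :
    ghalf a a' b b' e he (vv F e b') = Q a a' b b' := lift_v _ _ _ _ _

lemma fg_commute (c d e : F) (hd : c * c * (b * b') = d) (he : a + a' = e) :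
    ∀ x y, Commute (fhalf a a' b b' c d hd x) (ghalf a a' b b' e he y) := by
  intro x y
  have hXu : Commute (ghalf a a' b b' e he (uu F e b')) (fhalf a a' b b' c d hd x) := by
    rw [ghalf_u]
    exact (commute_all (fhalf a a' b b' c d hd) (P a a' b b')
      (by rw [fhalf_u]; exact commXP a a' b b')
      (by rw [fhalf_v]; exact commYP a a' b b' c) x).symm
  have hXv : Commute (ghalf a a' b b' e he (vv F e b')) (fhalf a a' b b' c d hd x) := by
    rw [ghalf_v]
    exact (commute_all (fhalf a a' b b' c d hd) (Q a a' b b')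
      (by rw [fhalf_u]; exact commXQ a a' b b')
      (by rw [fhalf_v]; exact commYQ a a' b b' c) x).symm
  exact (commute_all (ghalf a a' b b' e he) (fhalf a a' b b' c d hd x) hXu hXv y).symm

/-- The combined map on the tensor product. -/
noncomputable def bighom (c d e : F) (hd : c * c * (b * b') = d) (he : a + a' = e) :
    (QuatAlg F a d ⊗[F] QuatAlg F e b') →ₐ[F] T :=
  Algebra.TensorProduct.lift (fhalf a a' b b' c d hd) (ghalf a a' b b' e he)
    (fg_commute a a' b b' c d e hd he)

@[simp] lemma bighom_tmul (c d e : F) (hd : c * c * (b * b') = d) (he : a + a' = e)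
    (x : QuatAlg F a d) (y : QuatAlg F e b') :
    bighom a a' b b' c d e hd he (x ⊗ₜ[F] y)
      = fhalf a a' b b' c d hd x * ghalf a a' b b' e he y :=
  Algebra.TensorProduct.lift_tmul _ _ _ _ _

end main

end QuatAlg

theorem stmt1 (F : Type*) [Field F] [CharP F 2] (a₁ a₂ : F) (b₁ b₂ : F)
    (hb₁ : b₁ ≠ 0) (hb₂ : b₂ ≠ 0) :
    Nonempty ((QuatAlg F a₁ b₁ ⊗[F] QuatAlg F a₂ b₂) ≃ₐ[F]
      (QuatAlg F a₁ (b₁ * b₂) ⊗[F] QuatAlg F (a₁ + a₂) b₂)) := by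
  have hd₂ : b₂⁻¹ * b₂⁻¹ * ((b₁ * b₂) * b₂) = b₁ := by field_simp
  have he₂ : a₁ + (a₁ + a₂) = a₂ := by
    rw [← add_assoc, QuatAlg.add_self_eq_zero' (F := F), zero_add]
  refine ⟨AlgEquiv.ofAlgHom
    (QuatAlg.bighom a₁ (a₁ + a₂) (b₁ * b₂) b₂ b₂⁻¹ b₁ a₂ hd₂ he₂)
    (QuatAlg.bighom a₁ a₂ b₁ b₂ 1 (b₁ * b₂) (a₁ + a₂) (by ring) rfl)
    ?_ ?_⟩ <;>
  · apply Algebra.TensorProduct.ext <;>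
    · apply QuatAlg.hom_ext <;>
      · simp only [AlgHom.restrictScalars_apply, AlgHom.coe_comp, Function.comp_apply, AlgHom.coe_id, id_eq,
          Algebra.TensorProduct.includeLeft_apply,
          Algebra.TensorProduct.includeRight_apply,
          QuatAlg.bighom_tmul, QuatAlg.fhalf_u, QuatAlg.fhalf_v, QuatAlg.ghalf_u,
          QuatAlg.ghalf_v, map_one, mul_one, one_mul, QuatAlg.X, QuatAlg.Y,
          QuatAlg.P, QuatAlg.Q, one_smul, map_add, map_smul, smul_mul_assoc,
          mul_smul_comm, Algebra.TensorProduct.tmul_mul_tmul, QuatAlg.v_sq,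
          Algebra.algebraMap_eq_smul_one, TensorProduct.tmul_smul, smul_smul,
          inv_mul_cancel₀ hb₂]
        try rfl
        try (abel_nf
             simp only [QuatAlg.two_zsmul_eq_zero' F, QuatAlg.two_nsmul_eq_zero' F,
               QuatAlg.neg_eq_self' F, zero_add, add_zero, neg_zero, one_zsmul,
               neg_one_zsmul])
end

section
/- Let F be a field of characteristic ≠ 2, let n ≥ 2, and let a₁, …, a_{n−1}, b₁, b₂ ∈ Fˣ. Write τ = ⟨⟨a₁,…,a_{n−1}⟩⟩ for the (n−1)-fold Pfister form. If the quadratic form (−b₁)·τ ⊥ b₂·τ is isotropic, then the n-fold Pfister forms ⟨⟨b₁,a₁,…,a_{n−1}⟩⟩ and ⟨⟨b₂,a₁,…,a_{n−1}⟩⟩ are isometric. -/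
/-- The `n`-fold Pfister form `⟨⟨a₁,…,aₙ⟩⟩`: the diagonal quadratic form indexed by
subsets `S ⊆ {1,…,n}`, with the coefficient of the variable indexed by `S` equal to
`∏_{i ∈ S} (-aᵢ)`. -/
noncomputable def pfister (F : Type*) [Field F] {n : ℕ} (a : Fin n → F) :
    QuadraticForm F (Finset (Fin n) → F) :=
  QuadraticMap.weightedSumSquares F fun S : Finset (Fin n) => ∏ i ∈ S, (-a i)

/-- A quadratic form is hyperbolic if it is equivalent (isometric) to an orthogonal sum
of copies of the hyperbolic plane `⟨1, -1⟩`. -/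
def IsHyperbolic {F M : Type*} [Field F] [AddCommGroup M] [Module F M]
    (q : QuadraticForm F M) : Prop :=
  ∃ m : ℕ, QuadraticMap.Equivalent q
    (QuadraticMap.weightedSumSquares F fun p : Fin m × Fin 2 => if p.2 = 0 then (1 : F) else -1)

open QuadraticMap

section Infra
variable {F : Type*} [Field F] {M M' : Type*} [AddCommGroup M] [Module F M]
  [AddCommGroup M'] [Module F M']

lemma wss_apply' {ι : Type*} [Fintype ι] (w : ι → F) (x : ι → F) :
    weightedSumSquares F w x = ∑ i, w i * (x i * x i) := by
  rw [weightedSumSquares_apply]; simp [smul_eq_mul]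

lemma smul_wss {ι : Type*} [Fintype ι] (c : F) (w : ι → F) :
    c • weightedSumSquares F w = weightedSumSquares F (fun i => c * w i) := by
  ext x
  simp [QuadraticMap.smul_apply, wss_apply', Finset.mul_sum, mul_assoc]

lemma wss_reindex {ι₁ ι₂ : Type*} [Fintype ι₁] [Fintype ι₂] (e : ι₁ ≃ ι₂) (w : ι₂ → F) :
    Equivalent (weightedSumSquares F (w ∘ e)) (weightedSumSquares F w) := by
  refine ⟨⟨LinearEquiv.funCongrLeft F F e.symm, fun x => ?_⟩⟩
  rw [wss_apply', wss_apply']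
  show ∑ i₂, w i₂ * (x (e.symm i₂) * x (e.symm i₂)) = _
  rw [← e.sum_comp (fun i₂ => w i₂ * (x (e.symm i₂) * x (e.symm i₂)))]
  simp

lemma wss_prod {ι₁ ι₂ : Type*} [Fintype ι₁] [Fintype ι₂] (w₁ : ι₁ → F) (w₂ : ι₂ → F) :
    Equivalent ((weightedSumSquares F w₁).prod (weightedSumSquares F w₂))
      (weightedSumSquares F (Sum.elim w₁ w₂)) := by
  refine ⟨⟨(LinearEquiv.sumArrowLequivProdArrow ι₁ ι₂ F F).symm, fun x => ?_⟩⟩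
  rw [wss_apply']
  rw [Fintype.sum_sum_type]
  rw [QuadraticMap.prod_apply, wss_apply', wss_apply']
  congr 1

lemma wss_universal {ι : Type*} [Fintype ι] [DecidableEq ι] (w : ι → F) (hw : ∀ i, w i ≠ 0)
    (hchar : ringChar F ≠ 2) {v : ι → F} (hv : v ≠ 0) (h0 : weightedSumSquares F w v = 0)
    (c : F) : ∃ x, weightedSumSquares F w x = c := by
  have h2 : (2 : F) ≠ 0 := Ring.two_ne_zero hchar
  obtain ⟨i₀, hi₀⟩ : ∃ i, v i ≠ 0 := Function.ne_iff.mp hv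
  have key : ∀ t : F, weightedSumSquares F w (t • v + Pi.single i₀ 1)
      = w i₀ * (2 * t * v i₀ + 1) := by
    intro t
    rw [wss_apply']
    have hterm : ∀ i : ι, w i * (((t • v + Pi.single i₀ 1 : ι → F)) i
          * ((t • v + Pi.single i₀ 1 : ι → F)) i)
        = t ^ 2 * (w i * (v i * v i)) + (if i₀ = i then w i₀ * (2 * t * v i₀ + 1) else 0) := by
      intro i
      by_cases h : i = i₀
      · subst h
        simp [Pi.single_apply, smul_eq_mul]
        ring
      · have h' : ¬ i₀ = i := fun hh => h hh.symm
        simp [Pi.single_apply, smul_eq_mul, h, h']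
        ring
    rw [Finset.sum_congr rfl (fun i _ => hterm i), Finset.sum_add_distrib, ← Finset.mul_sum]
    rw [wss_apply'] at h0
    rw [h0, Finset.sum_ite_eq]
    simp
  refine ⟨((c - w i₀) / (2 * w i₀ * v i₀)) • v + Pi.single i₀ 1, ?_⟩
  rw [key]
  field_simp [hw i₀]
  ring

lemma Equiv_smul_congr (c : F) {q : QuadraticForm F M} {q' : QuadraticForm F M'}
    (h : Equivalent q q') : Equivalent (c • q) (c • q') := by
  obtain ⟨f⟩ := h
  exact ⟨⟨f.toLinearEquiv, fun m => by
    simp [QuadraticMap.smul_apply, f.map_app' m]⟩⟩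

lemma Equiv_sq_smul {e : F} (he : e ≠ 0) (d : F) (q : QuadraticForm F M) :
    Equivalent ((e * e * d) • q) (d • q) := by
  refine ⟨⟨LinearEquiv.smulOfUnit (Units.mk0 e he), fun m => ?_⟩⟩
  have : (LinearEquiv.smulOfUnit (R := F) (M := M) (Units.mk0 e he)) m = e • m := rfl
  simp [this, QuadraticMap.smul_apply, QuadraticMap.map_smul, smul_eq_mul]
  ring

/-- A quadratic form is round if every nonzero represented value is a similarity factor. -/
def Round (q : QuadraticForm F M) : Prop :=
  ∀ c : F, c ≠ 0 → (∃ x, q x = c) → Equivalent (c • q) q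

lemma Round.of_equiv {q : QuadraticForm F M} {q' : QuadraticForm F M'}
    (h : Equivalent q q') (hq : Round q) : Round q' := by
  intro c hc ⟨x, hx⟩
  obtain ⟨f⟩ := h
  have h1 : Equivalent (c • q) q := hq c hc ⟨f.symm x, by rw [f.symm.map_app x, hx]⟩
  exact ((Equiv_smul_congr c ⟨f⟩).symm.trans h1).trans ⟨f⟩

lemma smul_prod (c : F) (q₁ : QuadraticForm F M) (q₂ : QuadraticForm F M') :
    c • (q₁.prod q₂) = (c • q₁).prod (c • q₂) := by
  ext x
  simp [QuadraticMap.smul_apply, QuadraticMap.prod_apply, mul_add]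

/-- the key explicit binary isometry: `(1-b')•(q ⊥ (-b')q) ≅ q ⊥ (-b')q`. -/
lemma binary_step (b' : F) (hu : (1 : F) - b' ≠ 0) (q : QuadraticForm F M) :
    Equivalent (((1 - b') • (q.prod ((-b') • q)))) (q.prod ((-b') • q)) := by
  have expand : ∀ x y : M, q (x + y) = q x + q y + polar q x y := fun x y => by
    rw [polar]; ring
  refine ⟨⟨{ toFun := fun v => (v.1 + b' • v.2, v.1 + v.2)
             invFun := fun w => ((1-b')⁻¹ • (w.1 - b' • w.2), (1-b')⁻¹ • (w.2 - w.1))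
             left_inv := ?_
             right_inv := ?_
             map_add' := ?_
             map_smul' := ?_ }, ?_⟩⟩
  · intro v w; refine Prod.ext ?_ ?_ <;> simp only [Prod.fst_add, Prod.snd_add] <;> module
  · intro r v; refine Prod.ext ?_ ?_ <;>
      simp only [Prod.smul_fst, Prod.smul_snd, RingHom.id_apply] <;> module
  · intro v
    refine Prod.ext ?_ ?_ <;> simp only []
    · have : v.1 + b' • v.2 - b' • (v.1 + v.2) = (1 - b') • v.1 := by module
      rw [this, smul_smul, inv_mul_cancel₀ hu, one_smul]
    · have : v.1 + v.2 - (v.1 + b' • v.2) = (1 - b') • v.2 := by module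
      rw [this, smul_smul, inv_mul_cancel₀ hu, one_smul]
  · intro w
    refine Prod.ext ?_ ?_ <;> simp only []
    · have : (1-b')⁻¹ • (w.1 - b' • w.2) + b' • ((1-b')⁻¹ • (w.2 - w.1))
          = ((1-b')⁻¹ * (1-b')) • w.1 := by module
      rw [this, inv_mul_cancel₀ hu, one_smul]
    · have : (1-b')⁻¹ • (w.1 - b' • w.2) + (1-b')⁻¹ • (w.2 - w.1)
          = ((1-b')⁻¹ * (1-b')) • w.2 := by module
      rw [this, inv_mul_cancel₀ hu, one_smul]
  · intro v
    show (q.prod ((-b') • q)) (v.1 + b' • v.2, v.1 + v.2) = _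
    simp only [QuadraticMap.prod_apply, QuadraticMap.smul_apply, expand,
      QuadraticMap.map_smul, polar_smul_right, smul_eq_mul]
    ring

lemma round_prod {q : QuadraticForm F M} (hq : Round q) {b : F} (hb : b ≠ 0) :
    Round (q.prod ((-b) • q)) := by
  intro c hc hrep
  obtain ⟨⟨x, y⟩, hxy⟩ := hrep
  rw [QuadraticMap.prod_apply, QuadraticMap.smul_apply, smul_eq_mul] at hxy
  by_cases he : q y = 0
  · have hd : q x = c := by rw [he] at hxy; rw [← hxy]; ring
    rw [smul_prod]
    refine Equivalent.prod (hq c hc ⟨x, hd⟩) ?_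
    rw [smul_comm]
    exact Equiv_smul_congr (-b) (hq c hc ⟨x, hd⟩)
  · by_cases hd : q x = 0
    · have hce : c = -b * q y := by rw [hd] at hxy; rw [← hxy]; ring
      rw [smul_prod]
      have h1 : Equivalent (c • q) ((-b) • q) := by
        rw [hce, ← smul_smul]
        exact Equiv_smul_congr (-b) (hq (q y) he ⟨y, rfl⟩)
      have h2 : Equivalent (c • (-b) • q) q := by
        rw [smul_smul, hce]
        have hh : -b * q y * -b = b * b * q y := by ring
        rw [hh]
        exact (Equiv_sq_smul hb (q y) q).trans (hq (q y) he ⟨y, rfl⟩)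
      exact (Equivalent.prod h1 h2).trans ⟨IsometryEquiv.prodComm _ _⟩
    · -- both values nonzero
      set d := q x with hdd
      set e := q y with hee
      set b' : F := b * e * d⁻¹ with hb'
      have hbe : Equivalent ((-(b * e)) • q) ((-b) • q) := by
        have hh : (-(b * e)) • q = (-b) • (e • q) := by rw [smul_smul]; ring_nf
        rw [hh]
        exact Equiv_smul_congr (-b) (hq e he ⟨y, rfl⟩)
      have hstep1 : Equivalent ((-b') • q) ((-b) • q) := by
        have h₁ : (-b') = d⁻¹ * d⁻¹ * (-(b * e * d)) := by
          rw [hb']; linear_combination (b * e * d⁻¹) * (inv_mul_cancel₀ hd)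
        rw [h₁]
        refine (Equiv_sq_smul (inv_ne_zero hd) (-(b * e * d)) q).trans ?_
        have h₂ : (-(b * e * d)) • q = (-(b * e)) • (d • q) := by rw [smul_smul]; ring_nf
        rw [h₂]
        exact (Equiv_smul_congr (-(b * e)) (hq d hd ⟨x, rfl⟩)).trans hbe
      have hu : (1 : F) - b' ≠ 0 := by
        intro h
        apply hc
        have : c = d * (1 - b') := by rw [hb', ← hxy]; field_simp; ring
        rw [this, h, mul_zero]
      have hcdu : c • (q.prod ((-b') • q)) = d • ((1 - b') • (q.prod ((-b') • q))) := by
        rw [smul_smul]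
        congr 1
        rw [hb', ← hxy]; field_simp; ring
      have hchain : Equivalent (c • (q.prod ((-b') • q))) (q.prod ((-b) • q)) := by
        rw [hcdu]
        refine (Equiv_smul_congr d (binary_step b' hu q)).trans ?_
        rw [smul_prod]
        refine Equivalent.prod (hq d hd ⟨x, rfl⟩) ?_
        have h₃ : d • (-b') • q = (-(b * e)) • q := by
          rw [smul_smul]; congr 1; rw [hb']
          linear_combination (-(b * e)) * (mul_inv_cancel₀ hd)
        rw [h₃]
        exact hbe
      refine Equivalent.trans ?_ hchain
      exact Equiv_smul_congr c (Equivalent.prod (Equivalent.refl q) hstep1.symm)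

end Infra

section FS
variable {F : Type*} [Field F]

noncomputable def finsetSuccEquiv (k : ℕ) :
    Finset (Fin k) ⊕ Finset (Fin k) ≃ Finset (Fin (k + 1)) where
  toFun := Sum.elim (fun S => S.map (Fin.succEmb k)) fun S => insert 0 (S.map (Fin.succEmb k))
  invFun T := if (0 : Fin (k + 1)) ∈ T
    then .inr ((T.erase 0).preimage Fin.succ (Fin.succ_injective k).injOn)
    else .inl (T.preimage Fin.succ (Fin.succ_injective k).injOn)
  left_inv := by
    rintro (S | S) <;> dsimp only [Sum.elim_inl, Sum.elim_inr]
    · rw [if_neg]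
      · congr 1
        ext j
        simp [Finset.mem_preimage]
      · simp [Fin.succ_ne_zero, eq_comm]
    · rw [if_pos (Finset.mem_insert_self 0 _)]
      congr 1
      rw [Finset.erase_insert (by simp [Fin.succ_ne_zero, eq_comm])]
      ext j
      simp [Finset.mem_preimage]
  right_inv := by
    intro T
    dsimp only
    by_cases h0 : (0 : Fin (k + 1)) ∈ T
    · rw [if_pos h0, Sum.elim_inr]
      ext i
      rcases eq_or_ne i 0 with rfl | hi
      · simp [h0]
      · obtain ⟨j, rfl⟩ := Fin.exists_succ_eq.mpr hi
        simp [Finset.mem_preimage, Fin.succ_ne_zero, Fin.succ_injective k |>.eq_iff]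
    · rw [if_neg h0, Sum.elim_inl]
      ext i
      rcases eq_or_ne i 0 with rfl | hi
      · simp [h0, Fin.succ_ne_zero, eq_comm]
      · obtain ⟨j, rfl⟩ := Fin.exists_succ_eq.mpr hi
        simp [Finset.mem_preimage, (Fin.succ_injective k).eq_iff]

lemma finsetSuccEquiv_weights {k : ℕ} (b : F) (a : Fin k → F) :
    (fun S : Finset (Fin (k + 1)) => ∏ i ∈ S, (-(Fin.cons b a) i)) ∘ (finsetSuccEquiv k)
      = Sum.elim (fun S : Finset (Fin k) => ∏ i ∈ S, (-a i))
          (fun S : Finset (Fin k) => -b * ∏ i ∈ S, (-a i)) := by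
  funext S
  rcases S with S | S
  · show ∏ i ∈ S.map (Fin.succEmb k), (-(Fin.cons b a) i) = _
    rw [Finset.prod_map]
    simp [Fin.cons_succ]
  · show ∏ i ∈ insert 0 (S.map (Fin.succEmb k)), (-(Fin.cons b a) i) = _
    rw [Finset.prod_insert (by simp [Fin.succ_ne_zero, eq_comm]), Finset.prod_map]
    simp [Fin.cons_succ, Fin.cons_zero]
end FS

section Pfister
variable {F : Type*} [Field F]

lemma pfister_cons {k : ℕ} (b : F) (a : Fin k → F) :
    Equivalent (pfister F (Fin.cons b a)) ((pfister F a).prod ((-b) • pfister F a)) := by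
  have h1 : (-b) • pfister F a
      = weightedSumSquares F (fun S : Finset (Fin k) => -b * ∏ i ∈ S, (-a i)) := by
    rw [pfister, smul_wss]
  have e1 := wss_reindex (F := F) (finsetSuccEquiv k)
    (fun S : Finset (Fin (k + 1)) => ∏ i ∈ S, (-(Fin.cons b a : Fin (k + 1) → F) i))
  rw [finsetSuccEquiv_weights b a] at e1
  rw [pfister, h1, pfister]
  exact e1.symm.trans (wss_prod _ _).symm

lemma round_pfister : ∀ {k : ℕ} (a : Fin k → F), (∀ i, a i ≠ 0) → Round (pfister F a) := by
  intro k
  induction k with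
  | zero =>
    intro a _ c hc hrep
    obtain ⟨x, hx⟩ := hrep
    have hx' : c = x ∅ * x ∅ := by
      have hS : ∀ S : Finset (Fin 0), S = ∅ :=
        fun S => Finset.eq_empty_of_forall_notMem fun i _ => i.elim0
      have huniv : (Finset.univ : Finset (Finset (Fin 0))) = {∅} := by
        ext S
        simp only [Finset.mem_univ, Finset.mem_singleton, true_iff]
        exact hS S
      rw [← hx, pfister, wss_apply', huniv, Finset.sum_singleton, Finset.prod_empty, one_mul]
    have hx0 : x ∅ ≠ 0 := by
      intro h; apply hc; rw [hx', h, mul_zero]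
    have : c • pfister F a = (x ∅ * x ∅ * 1) • pfister F a := by rw [mul_one, ← hx']
    rw [this]
    have h1 : Equivalent ((1 : F) • pfister F a) (pfister F a) := by
      rw [one_smul]
    exact (Equiv_sq_smul hx0 1 (pfister F a)).trans h1
  | succ m ih =>
    intro a ha
    have h := round_prod (ih (Fin.tail a) (fun i => ha i.succ)) (b := a 0) (ha 0)
    have hdec := pfister_cons (a 0) (Fin.tail a)
    rw [Fin.cons_self_tail a] at hdec
    exact Round.of_equiv hdec.symm h

end Pfister

theorem stmt11 (F : Type*) [Field F] (hchar : ringChar F ≠ 2)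
    (n : ℕ) (hn : 2 ≤ n) (a : Fin (n - 1) → F) (ha : ∀ i, a i ≠ 0)
    (b₁ b₂ : F) (hb₁ : b₁ ≠ 0) (hb₂ : b₂ ≠ 0)
    (hiso : ∃ x, x ≠ 0 ∧
      QuadraticMap.prod ((-b₁) • pfister F a) (b₂ • pfister F a) x = 0) :
    QuadraticMap.Equivalent (pfister F (Fin.cons b₁ a)) (pfister F (Fin.cons b₂ a)) := by
  set τ := pfister F a with hτ
  have hround : Round τ := round_pfister a ha
  obtain ⟨x, hx0, hx⟩ := hiso
  rw [QuadraticMap.prod_apply, QuadraticMap.smul_apply, QuadraticMap.smul_apply,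
    smul_eq_mul, smul_eq_mul] at hx
  have hbal : b₁ * τ x.1 = b₂ * τ x.2 := by linear_combination -hx
  have hs0 : b₁ * b₂⁻¹ ≠ 0 := mul_ne_zero hb₁ (inv_ne_zero hb₂)
  have hst : Equivalent ((b₁ * b₂⁻¹) • τ) τ := by
    by_cases h1 : τ x.1 = 0
    · -- isotropic case
      have h2 : τ x.2 = 0 := by
        have : b₂ * τ x.2 = 0 := by rw [← hbal, h1, mul_zero]
        exact (mul_eq_zero.mp this).resolve_left hb₂
      have hv : ∃ v : Finset (Fin (n - 1)) → F, v ≠ 0 ∧ τ v = 0 := by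
        rcases eq_or_ne x.1 0 with hx1 | hx1
        · refine ⟨x.2, fun h => hx0 ?_, h2⟩
          exact Prod.ext hx1 h
        · exact ⟨x.1, hx1, h1⟩
      obtain ⟨v, hv0, hviso⟩ := hv
      have hw : ∀ S : Finset (Fin (n - 1)), (∏ i ∈ S, (-a i)) ≠ 0 :=
        fun S => Finset.prod_ne_zero_iff.mpr fun i _ => neg_ne_zero.mpr (ha i)
      obtain ⟨z, hz⟩ := wss_universal _ hw hchar hv0 hviso (b₁ * b₂⁻¹)
      exact hround _ hs0 ⟨z, hz⟩
    · have h2 : τ x.2 ≠ 0 := by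
        intro h
        rw [h, mul_zero, mul_eq_zero] at hbal
        exact h1 (hbal.resolve_left hb₁)
      have hseq : b₁ * b₂⁻¹ = (τ x.1)⁻¹ * (τ x.1)⁻¹ * (τ x.2 * τ x.1) := by
        field_simp
        linear_combination hbal
      rw [hseq]
      refine (Equiv_sq_smul (inv_ne_zero h1) _ τ).trans ?_
      rw [← smul_smul]
      exact (Equiv_smul_congr (τ x.2) (hround (τ x.1) h1 ⟨x.1, rfl⟩)).trans
        (hround (τ x.2) h2 ⟨x.2, rfl⟩)
  have h2 : Equivalent ((-b₁) • τ) ((-b₂) • τ) := by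
    have : (-b₁) • τ = (-b₂) • ((b₁ * b₂⁻¹) • τ) := by
      rw [smul_smul]
      congr 1
      linear_combination b₁ * (mul_inv_cancel₀ hb₂)
    rw [this]
    exact Equiv_smul_congr (-b₂) hst
  exact (pfister_cons b₁ a).trans ((Equivalent.prod (Equivalent.refl τ) h2).trans
    (pfister_cons b₂ a).symm)
end

section
/- Let k be a field of characteristic ≠ 2, let n ≥ 2, and let F = k(X₁, …, X_{n−1}, Y₁, Y₂) be the rational function field in n+1 variables over k. Then the (n+1)-fold Pfister form ⟨⟨Y₁, −Y₂, X₁, …, X_{n−1}⟩⟩ is anisotropic over F. -/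
/-- The rational function field `k(X₁, …, X_{n-1}, Y₁, Y₂)` in `(n-1) + 2` variables,
where the variable indexed by `0` is `Y₁`, the one indexed by `1` is `Y₂`, and the
remaining `n - 1` variables are `X₁, …, X_{n-1}`. -/
def RatFunc' (k : Type*) [Field k] (n : ℕ) : Type _ :=
  FractionRing (MvPolynomial (Fin (n - 1 + 1 + 1)) k)

noncomputable instance (k : Type*) [Field k] (n : ℕ) : Field (RatFunc' k n) :=
  inferInstanceAs (Field (FractionRing (MvPolynomial (Fin (n - 1 + 1 + 1)) k)))

noncomputable instance (k : Type*) [Field k] (n : ℕ) : Algebra k (RatFunc' k n) :=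
  inferInstanceAs (Algebra k (FractionRing (MvPolynomial (Fin (n - 1 + 1 + 1)) k)))

/-- The variables of the rational function field, as elements of it. -/
noncomputable def rvar (k : Type*) [Field k] (n : ℕ) (i : Fin (n - 1 + 1 + 1)) :
    RatFunc' k n :=
  algebraMap (MvPolynomial (Fin (n - 1 + 1 + 1)) k)
    (FractionRing (MvPolynomial (Fin (n - 1 + 1 + 1)) k)) (MvPolynomial.X i)

/-- The slot vector `(Y₁, −Y₂, X₁, …, X_{n−1})` of the Pfister form. -/
noncomputable def slots (k : Type*) [Field k] (n : ℕ) : Fin (n - 1 + 1 + 1) → RatFunc' k n :=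
  Fin.cons (rvar k n 0)
    (Fin.cons (-(rvar k n 1)) (fun i : Fin (n - 1) => rvar k n i.succ.succ))


section PfisterAux
open AddMonoidAlgebra MvPolynomial
variable {k : Type*} [Field k] {m : ℕ}

lemma chi_apply (S : Finset (Fin m)) (i : Fin m) :
    (∑ j ∈ S, Finsupp.single j (1:ℕ)) i = if i ∈ S then 1 else 0 := by
  rw [Finsupp.finset_sum_apply]
  simp [Finsupp.single_apply]

lemma key_poly (T : Finset (Finset (Fin m))) (hT : T.Nonempty)
    (c : Finset (Fin m) → k) (hc : ∀ S ∈ T, c S ≠ 0)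
    (p : Finset (Fin m) → MvPolynomial (Fin m) k) (hp : ∀ S ∈ T, p S ≠ 0) :
    ∑ S ∈ T, (MvPolynomial.C (c S) * ∏ i ∈ S, MvPolynomial.X i) * (p S * p S) ≠ 0 := by
  have hinj : Function.Injective (toLex : (Fin m →₀ ℕ) → Lex (Fin m →₀ ℕ)) := toLex.injective
  have hmul : ∀ a b : MvPolynomial (Fin m) k, a ≠ 0 → b ≠ 0 →
      supDegree toLex (a * b) = supDegree toLex a + supDegree toLex b := fun a b ha hb =>
    supDegree_mul hinj toLex_add
      (mul_ne_zero ((leadingCoeff_ne_zero hinj).2 ha) ((leadingCoeff_ne_zero hinj).2 hb)) ha hb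
  have hCne : ∀ S ∈ T, (MvPolynomial.C (c S) : MvPolynomial (Fin m) k) ≠ 0 := fun S hS => by
    simpa using hc S hS
  have hmon : ∀ S : Finset (Fin m),
      (∏ i ∈ S, MvPolynomial.X i : MvPolynomial (Fin m) k)
        = monomial (∑ i ∈ S, Finsupp.single i 1) 1 := fun S => (monomial_sum_one S _).symm
  have hmonne : ∀ S : Finset (Fin m),
      (∏ i ∈ S, MvPolynomial.X i : MvPolynomial (Fin m) k) ≠ 0 := fun S => by
    rw [hmon S]; exact fun h => one_ne_zero ((monomial_eq_zero).1 h)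
  have hdeg : ∀ S ∈ T, supDegree toLex ((MvPolynomial.C (c S) * ∏ i ∈ S, MvPolynomial.X i)
      * (p S * p S)) = toLex ((∑ i ∈ S, Finsupp.single i 1)
        + (ofLex (supDegree toLex (p S)) + ofLex (supDegree toLex (p S)))) := by
    intro S hS
    rw [hmul _ _ (mul_ne_zero (hCne S hS) (hmonne S)) (mul_ne_zero (hp S hS) (hp S hS)),
      hmul _ _ (hCne S hS) (hmonne S), hmul _ _ (hp S hS) (hp S hS), supDegree_toLex_C,
      zero_add, hmon S, ← single_eq_monomial, supDegree_single_ne_zero _ one_ne_zero,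
      toLex_add, toLex_add]
    simp
  refine sum_ne_zero_of_injOn_supDegree (D := toLex) hT
    (fun S hS => mul_ne_zero (mul_ne_zero (hCne S hS) (hmonne S))
      (mul_ne_zero (hp S hS) (hp S hS))) ?_
  intro S hS S' hS' he
  simp only [Function.comp_apply] at he
  rw [hdeg S hS, hdeg S' hS'] at he
  have he' := hinj he
  ext i
  have := DFunLike.congr_fun he' i
  simp only [Finsupp.add_apply, chi_apply] at this
  by_cases h1 : i ∈ S <;> by_cases h2 : i ∈ S' <;> simp [h1, h2] at this ⊢ <;> omega

lemma master (c v : Finset (Fin m) → FractionRing (MvPolynomial (Fin m) k))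
    (hc : ∀ S, ∃ u : k, u ≠ 0 ∧ c S = algebraMap (MvPolynomial (Fin m) k)
      (FractionRing (MvPolynomial (Fin m) k)) (MvPolynomial.C u * ∏ i ∈ S, MvPolynomial.X i))
    (hv : ∑ S, c S * (v S * v S) = 0) : v = 0 := by
  classical
  by_contra hne
  obtain ⟨b, hb⟩ := IsLocalization.exist_integer_multiples
    (nonZeroDivisors (MvPolynomial (Fin m) k)) Finset.univ v
  have h3 : ∀ S, ∃ a : MvPolynomial (Fin m) k,
      algebraMap (MvPolynomial (Fin m) k) (FractionRing (MvPolynomial (Fin m) k)) a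
        = (b : MvPolynomial (Fin m) k) • v S := fun S =>
    RingHom.mem_range.mp (hb S (Finset.mem_univ S))
  choose p hp using h3
  choose u hu huc using hc
  have halg : Function.Injective (algebraMap (MvPolynomial (Fin m) k)
      (FractionRing (MvPolynomial (Fin m) k))) := IsFractionRing.injective _ _
  have hbne : algebraMap (MvPolynomial (Fin m) k) (FractionRing (MvPolynomial (Fin m) k))
      (b : MvPolynomial (Fin m) k) ≠ 0 := fun h =>
    nonZeroDivisors.coe_ne_zero b (halg (by simpa using h))
  have h2 : ∑ S, c S * (((b : MvPolynomial (Fin m) k) • v S)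
      * ((b : MvPolynomial (Fin m) k) • v S)) = 0 := by
    have heq : ∑ S, c S * (((b : MvPolynomial (Fin m) k) • v S)
        * ((b : MvPolynomial (Fin m) k) • v S))
        = algebraMap _ _ (b : MvPolynomial (Fin m) k)
          * algebraMap _ _ (b : MvPolynomial (Fin m) k) * ∑ S, c S * (v S * v S) := by
      rw [Finset.mul_sum]
      refine Finset.sum_congr rfl fun S _ => ?_
      rw [Algebra.smul_def]
      ring
    rw [heq, hv, mul_zero]
  have h4 : algebraMap (MvPolynomial (Fin m) k) (FractionRing (MvPolynomial (Fin m) k))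
      (∑ S, (MvPolynomial.C (u S) * ∏ i ∈ S, MvPolynomial.X i) * (p S * p S)) = 0 := by
    rw [map_sum, ← h2]
    refine Finset.sum_congr rfl fun S _ => ?_
    rw [huc S, ← hp S, map_mul, map_mul, map_mul]
  have h5 : ∑ S, (MvPolynomial.C (u S) * ∏ i ∈ S, MvPolynomial.X i) * (p S * p S) = 0 :=
    halg (by simpa using h4)
  obtain ⟨S₀, hS₀⟩ := Function.ne_iff.1 hne
  have hS₀' : v S₀ ≠ 0 := by simpa using hS₀
  have hpS₀ : p S₀ ≠ 0 := by
    intro h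
    apply hS₀'
    have h6 := hp S₀
    rw [h, map_zero, Algebra.smul_def] at h6
    rcases mul_eq_zero.mp h6.symm with h' | h'
    · exact absurd h' hbne
    · exact h'
  have hsum : ∑ S ∈ Finset.univ.filter (fun S => p S ≠ 0),
      (MvPolynomial.C (u S) * ∏ i ∈ S, MvPolynomial.X i) * (p S * p S) = 0 := by
    calc ∑ S ∈ Finset.univ.filter (fun S => p S ≠ 0),
        (MvPolynomial.C (u S) * ∏ i ∈ S, MvPolynomial.X i) * (p S * p S)
        = ∑ S, (MvPolynomial.C (u S) * ∏ i ∈ S, MvPolynomial.X i) * (p S * p S) :=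
          Finset.sum_filter_of_ne fun S _ h hp0 => h (by rw [hp0, mul_zero, mul_zero])
      _ = 0 := h5
  exact key_poly _ ⟨S₀, Finset.mem_filter.2 ⟨Finset.mem_univ _, hpS₀⟩⟩
    u (fun S _ => hu S) p (fun S hS => (Finset.mem_filter.1 hS).2) hsum

end PfisterAux

theorem stmt12 (k : Type*) [Field k] (hchar : ringChar k ≠ 2) (n : ℕ) (hn : 2 ≤ n) :
    (pfister (RatFunc' k n) (slots k n)).Anisotropic := by
  intro v hv
  have hslot : ∀ i : Fin (n - 1 + 1 + 1), ∃ u : k, u ≠ 0 ∧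
      -(slots k n i) = algebraMap (MvPolynomial (Fin (n - 1 + 1 + 1)) k)
        (FractionRing (MvPolynomial (Fin (n - 1 + 1 + 1)) k))
        (MvPolynomial.C u * MvPolynomial.X i) := by
    intro i
    refine Fin.cases ?_ (fun j => ?_) i
    · refine ⟨-1, neg_ne_zero.2 one_ne_zero, ?_⟩
      simp [slots, rvar, map_mul, map_neg, map_one, neg_one_mul]
      rfl
    · refine Fin.cases ?_ (fun j' => ?_) j
      · refine ⟨1, one_ne_zero, ?_⟩
        simp [slots, rvar, Fin.cons_succ, map_mul, map_one, one_mul]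
        exact neg_neg _
      · refine ⟨-1, neg_ne_zero.2 one_ne_zero, ?_⟩
        simp [slots, rvar, Fin.cons_succ, map_mul, map_neg, map_one, neg_one_mul]
        rfl
  choose u hu hval using hslot
  have hc : ∀ S : Finset (Fin (n - 1 + 1 + 1)),
      (∏ i ∈ S, -(slots k n i)) = algebraMap (MvPolynomial (Fin (n - 1 + 1 + 1)) k)
        (FractionRing (MvPolynomial (Fin (n - 1 + 1 + 1)) k))
        (MvPolynomial.C (∏ i ∈ S, u i) * ∏ i ∈ S, MvPolynomial.X i) := by
    intro S
    have hpoly : (MvPolynomial.C (∏ i ∈ S, u i) * ∏ i ∈ S, MvPolynomial.X i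
        : MvPolynomial (Fin (n - 1 + 1 + 1)) k) = ∏ i ∈ S, (MvPolynomial.C (u i) * MvPolynomial.X i) := by
      rw [Finset.prod_mul_distrib, map_prod]
    rw [Finset.prod_congr rfl fun i _ => hval i, hpoly,
      map_prod (algebraMap (MvPolynomial (Fin (n - 1 + 1 + 1)) k)
        (FractionRing (MvPolynomial (Fin (n - 1 + 1 + 1)) k)))
        (fun i => MvPolynomial.C (u i) * MvPolynomial.X i) S]
    rfl
  have hv' : ∑ S : Finset (Fin (n - 1 + 1 + 1)), (∏ i ∈ S, -(slots k n i)) * (v S * v S) = 0 := by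
    simpa [pfister, QuadraticMap.weightedSumSquares_apply, smul_eq_mul] using hv
  exact master _ v (fun S => ⟨∏ i ∈ S, u i, Finset.prod_ne_zero_iff.2 fun i _ => hu i, hc S⟩) hv'
end
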